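/- If a box b of D^k is right extremal in D relative to ℓ(D), then b is right extremal in D^k relative to ℓ(D^k). -/

import Mathlib

open scoped Classical

/-- height of column `j` of the diagram (columns numbered from 1). -/
def hgt (c : List ℕ) (j : ℕ) : ℕ := c.getD (j - 1) 0

/-- number of boxes in the columns strictly to the left of column `j`. -/
def off (c : List ℕ) (j : ℕ) : ℕ := (c.take (j - 1)).sum

/-- `(i, j)` (row `i`, column `j`) is a box of the diagram `D`. -/
def IsBox (c : List ℕ) (i j : ℕ) : Prop :=
  1 ≤ j ∧ j ≤ c.length ∧ 1 ≤ i ∧ i ≤ hgt c j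

/-- the entry of the box `(i, j)` in the tableau `T`. -/
def Tentry (c : List ℕ) (i j : ℕ) : ℕ := off c j + i

/-- the column of the box of `D` carrying entry `m` in `T`. -/
noncomputable def colOf (c : List ℕ) (m : ℕ) : ℕ := sInf {j | m ≤ (c.take j).sum}

/-- the row of the box of `D` carrying entry `m` in `T`. -/
noncomputable def rowOf (c : List ℕ) (m : ℕ) : ℕ := m - off c (colOf c m)

/-- the total order `≼` on entries: increasing down columns, then from right to left. -/
def ple (c : List ℕ) (a b : ℕ) : Prop :=
  colOf c b < colOf c a ∨ (colOf c a = colOf c b ∧ a ≤ b)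

/-- the strict version of `≼`. -/
def plt (c : List ℕ) (a b : ℕ) : Prop :=
  colOf c b < colOf c a ∨ (colOf c a = colOf c b ∧ a < b)

/-- column `j` has a left neighbour in `D`. -/
def HasLeftNb (c : List ℕ) (j : ℕ) : Prop :=
  ∃ i, 1 ≤ i ∧ i < j ∧ hgt c i = hgt c j ∧
    ∀ i', i < i' → i' < j → hgt c i' ≠ hgt c j

/-- the `j`-th column of the tableau `T`, rows to optional entries. -/
def Tcol (c : List ℕ) (j : ℕ) : ℕ → Option ℕ := fun i =>
  if 1 ≤ i ∧ i ≤ hgt c j then some (Tentry c i j) else none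

/-- one step of the propagation rule building `T(∞)`: the entry (if any) in row `t`
of column `j - 1` of `T(∞)` (given by `prev`) is propagated into the partially
built column `j` (given by `cur`). -/
noncomputable def propStep (c : List ℕ) (j : ℕ) (prev : ℕ → Option ℕ)
    (cur : ℕ → Option ℕ) (t : ℕ) : ℕ → Option ℕ :=
  match prev t with
  | none => cur
  | some l =>
    if hgt c j = t then
      if HasLeftNb c j ∧ cur (t + 1) = none then
        Function.update cur (t + 1) (some l)
      else cur
    else
      if cur t = none then Function.update cur t (some l) else cur

/-- the `j`-th column of the composition tableau `T(∞)`. -/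
noncomputable def TinfCol (c : List ℕ) : ℕ → ℕ → Option ℕ
  | 0 => fun _ => none
  | 1 => Tcol c 1
  | j + 2 =>
      (List.range (c.sum + 2)).foldl
        (propStep c (j + 2) (TinfCol c (j + 1))) (Tcol c (j + 2))

/-- labels of lines: `1` or `∗`. -/
inductive Lab : Type
  | one : Lab
  | star : Lab
deriving DecidableEq

/-- maximal height among the columns `1, …, j - 1`. -/
def maxHgt (c : List ℕ) (j : ℕ) : ℕ := (c.take (j - 1)).foldr max 0

/-- the maximal column height of the diagram `D`. -/
def maxH (c : List ℕ) : ℕ := c.foldr max 0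

/-- `LineB c a i j lab` : the line family `ℓ(D)` contains a line labelled `lab`
whose left end-point is the box of `D` carrying entry `a` in `T` and whose right
end-point is the box `(i, j)` (row `i` of column `C_j`). -/
def LineB (c : List ℕ) (a i j : ℕ) (lab : Lab) : Prop :=
  2 ≤ j ∧ j ≤ c.length ∧ 1 ≤ i ∧
    (match lab with
     | Lab.one =>
         (maxHgt c j < hgt c j ∧ i ≤ maxHgt c j + 1 ∧ TinfCol c (j - 1) i = some a)
       ∨ (hgt c j ≤ maxHgt c j ∧ i + 1 ≤ hgt c j ∧ TinfCol c (j - 1) i = some a)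
       ∨ (hgt c j ≤ maxHgt c j ∧ i = hgt c j ∧
           ¬(∃ j', 1 ≤ j' ∧ j' < j ∧ hgt c j' = hgt c j) ∧
           TinfCol c (j - 1) i = some a)
       ∨ (hgt c j ≤ maxHgt c j ∧ i = hgt c j ∧
           (∃ j', 1 ≤ j' ∧ j' < j ∧ hgt c j' = hgt c j) ∧
           TinfCol c (j - 1) (i + 1) = some a)
     | Lab.star =>
         hgt c j ≤ maxHgt c j ∧ i = hgt c j ∧
           (∃ j', 1 ≤ j' ∧ j' < j ∧ hgt c j' = hgt c j) ∧
           TinfCol c (j - 1) i = some a)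

/-- `LineE c a b lab` : `ℓ(D)` contains a line labelled `lab` joining the box of `D`
carrying entry `a` in `T` (on the left) to the box carrying entry `b` (on the right). -/
def LineE (c : List ℕ) (a b : ℕ) (lab : Lab) : Prop :=
  ∃ i j, LineB c a i j lab ∧ b = Tentry c i j

/-- the box `(i, j)` of `D` is right extremal relative to `ℓ(D)`. -/
def RExt (c : List ℕ) (i j : ℕ) : Prop :=
  IsBox c i j ∧ ∀ i' j', ¬ LineB c (Tentry c i j) i' j' Lab.one

/-- `c` is a composition of `n`. -/
def IsComposition (c : List ℕ) (n : ℕ) : Prop :=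
  c.sum = n ∧ ∀ x ∈ c, 0 < x

-- auxiliary lemmas

lemma sum_take_le' (c : List ℕ) (n : ℕ) : (c.take n).sum ≤ c.sum := by
  conv_rhs => rw [← List.take_append_drop n c]
  rw [List.sum_append]; exact Nat.le_add_right _ _

lemma sum_take_mono (c : List ℕ) {a b : ℕ} (h : a ≤ b) :
    (c.take a).sum ≤ (c.take b).sum := by
  rw [show c.take a = (c.take b).take a by rw [List.take_take, min_eq_left h]]
  exact sum_take_le' _ _

lemma hgt_take (c : List ℕ) {m j : ℕ} (h : j - 1 < m) : hgt (c.take m) j = hgt c j := by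
  unfold hgt
  rcases lt_or_ge (j - 1) c.length with hl | hl
  · rw [List.getD_eq_getElem?_getD, List.getD_eq_getElem?_getD, List.getElem?_take, if_pos h]
  · rw [List.getD_eq_default _ _ (by rw [List.length_take]; omega),
      List.getD_eq_default _ _ hl]

lemma off_take (c : List ℕ) {m j : ℕ} (h : j - 1 ≤ m) : off (c.take m) j = off c j := by
  unfold off; rw [List.take_take, min_eq_left h]

lemma maxHgt_take_eq (c : List ℕ) {m j : ℕ} (h : j - 1 ≤ m) :
    ((c.take m).take (j - 1)).foldr max 0 = (c.take (j - 1)).foldr max 0 := by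
  rw [List.take_take, min_eq_left h]

lemma Tentry_take (c : List ℕ) {m j : ℕ} (h : j - 1 ≤ m) (i : ℕ) :
    Tentry (c.take m) i j = Tentry c i j := by
  unfold Tentry; rw [off_take c h]

lemma hgt_le_sum_take (w : List ℕ) {j : ℕ} (hj : 1 ≤ j) : hgt w j ≤ (w.take j).sum := by
  unfold hgt
  rcases lt_or_ge (j - 1) w.length with hl | hl
  · rw [List.getD_eq_getElem _ _ hl]
    apply List.le_sum_of_mem
    have h3 : j - 1 < (w.take j).length := by rw [List.length_take]; omega
    have h4 : (w.take j)[j - 1] = w[j - 1] := List.getElem_take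
    rw [← h4]; exact List.getElem_mem h3
  · rw [List.getD_eq_default _ _ hl]; exact Nat.zero_le _

lemma hasLeftNb_take (c : List ℕ) {m j : ℕ} (hj1 : 1 ≤ j) (hjm : j ≤ m) :
    HasLeftNb (c.take m) j ↔ HasLeftNb c j := by
  have hh : ∀ i, i ≤ m → hgt (c.take m) i = hgt c i := fun i hi => hgt_take c (by omega)
  unfold HasLeftNb
  constructor <;> rintro ⟨i, h1, h2, h3, h4⟩ <;> refine ⟨i, h1, h2, ?_, fun i' hlt hlt' => ?_⟩
  · rw [← hh i (by omega), ← hh j hjm]; exact h3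
  · rw [← hh i' (by omega), ← hh j hjm]; exact h4 i' hlt hlt'
  · rw [hh i (by omega), hh j hjm]; exact h3
  · rw [hh i' (by omega), hh j hjm]; exact h4 i' hlt hlt'

lemma Tcol_take (c : List ℕ) {m j : ℕ} (hj1 : 1 ≤ j) (hjm : j ≤ m) :
    Tcol (c.take m) j = Tcol c j := by
  funext i
  unfold Tcol
  rw [hgt_take c (by omega), Tentry_take c (by omega)]

lemma propStep_bound {c : List ℕ} {j B : ℕ} (hB : hgt c j ≤ B) {prev cur : ℕ → Option ℕ}
    (hprev : ∀ s, B + 1 < s → prev s = none) (hcur : ∀ s, B + 1 < s → cur s = none)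
    (t : ℕ) : ∀ s, B + 1 < s → propStep c j prev cur t s = none := by
  intro s hs
  cases hpt : prev t with
  | none => simp only [propStep, hpt]; exact hcur s hs
  | some l =>
    have ht : t ≤ B + 1 := by
      by_contra hcon; push_neg at hcon; rw [hprev t hcon] at hpt; cases hpt
    simp only [propStep, hpt]
    split_ifs with h1 h2 h3
    · rw [Function.update_of_ne (by omega)]; exact hcur s hs
    · exact hcur s hs
    · rw [Function.update_of_ne (by omega)]; exact hcur s hs
    · exact hcur s hs

lemma foldl_bound {c : List ℕ} {j B : ℕ} (hB : hgt c j ≤ B) {prev : ℕ → Option ℕ}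
    (hprev : ∀ s, B + 1 < s → prev s = none) :
    ∀ (L : List ℕ) (cur : ℕ → Option ℕ), (∀ s, B + 1 < s → cur s = none) →
      ∀ s, B + 1 < s → (L.foldl (propStep c j prev) cur) s = none
  | [], cur, hcur => hcur
  | t :: L, cur, hcur => by
      rw [List.foldl_cons]
      exact foldl_bound hB hprev L _ (propStep_bound hB hprev hcur t)

lemma TinfCol_bound (c : List ℕ) : ∀ j t, (c.take j).sum + 1 < t → TinfCol c j t = none
  | 0, t, _ => rfl
  | 1, t, ht => by
      have h1 : hgt c 1 ≤ (c.take 1).sum := hgt_le_sum_take c le_rfl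
      simp only [TinfCol, Tcol]
      rw [if_neg (by omega)]
  | (j + 2), t, ht => by
      simp only [TinfCol]
      have hB : hgt c (j + 2) ≤ (c.take (j + 2)).sum := hgt_le_sum_take c (by omega)
      have hprev : ∀ s, (c.take (j + 2)).sum + 1 < s → TinfCol c (j + 1) s = none := by
        intro s hs
        have := sum_take_mono c (show j + 1 ≤ j + 2 by omega)
        exact TinfCol_bound c (j + 1) s (by omega)
      have hcur : ∀ s, (c.take (j + 2)).sum + 1 < s → Tcol c (j + 2) s = none := by
        intro s hs
        unfold Tcol
        rw [if_neg (by omega)]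
      exact foldl_bound hB hprev _ _ hcur t ht

lemma foldl_id' {α β : Type*} (f : α → β → α) :
    ∀ (l : List β), (∀ x ∈ l, ∀ acc, f acc x = acc) → ∀ init, l.foldl f init = init
  | [], _, init => rfl
  | x :: l, h, init => by
      rw [List.foldl_cons, h x (by simp)]
      exact foldl_id' f l (fun y hy acc => h y (by simp [hy]) acc) init

lemma TinfCol_take (c : List ℕ) {m : ℕ} (hm1 : 1 ≤ m) :
    ∀ j, j ≤ m → TinfCol (c.take m) j = TinfCol c j
  | 0, _ => rfl
  | 1, _ => by
      simp only [TinfCol]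
      exact Tcol_take c le_rfl hm1
  | (j + 2), hj => by
      have IH := TinfCol_take c hm1 (j + 1) (by omega)
      simp only [TinfCol]
      rw [IH, Tcol_take c (by omega) (by omega)]
      have hps : propStep (c.take m) (j + 2) (TinfCol c (j + 1)) =
          propStep c (j + 2) (TinfCol c (j + 1)) := by
        funext cur t
        cases hpt : TinfCol c (j + 1) t with
        | none => simp only [propStep, hpt]
        | some l =>
          simp only [propStep, hpt, hgt_take c (show (j + 2) - 1 < m by omega),
            hasLeftNb_take c (show 1 ≤ j + 2 by omega) hj]
      rw [hps]
      set S := (c.take m).sum with hS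
      have hsum : S ≤ c.sum := sum_take_le' c m
      have hrange : List.range (c.sum + 2) =
          List.range (S + 2) ++ (List.range (c.sum - S)).map (fun x => (S + 2) + x) := by
        rw [← List.range_add]; congr 1; omega
      rw [hrange, List.foldl_append]
      apply Eq.symm
      apply foldl_id'
      intro x hx acc
      simp only [List.mem_map] at hx
      obtain ⟨y, hy, hxy⟩ := hx
      have hxS : S + 1 < x := by omega
      have hnone : TinfCol c (j + 1) x = none := by
        apply TinfCol_bound
        have := sum_take_mono c (show j + 1 ≤ m by omega)
        omega
      simp only [propStep, hnone]

lemma maxHgt_take (c : List ℕ) {m j : ℕ} (h : j - 1 ≤ m) :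
    maxHgt (c.take m) j = maxHgt c j := by
  unfold maxHgt; rw [List.take_take, min_eq_left h]

lemma lineB_one_take (c : List ℕ) {m : ℕ} (hm1 : 1 ≤ m) (hmle : m ≤ c.length)
    {a i' j' : ℕ} (h : LineB (c.take m) a i' j' Lab.one) : LineB c a i' j' Lab.one := by
  obtain ⟨h2, hlen, h1, hmain⟩ := h
  have hjm : j' ≤ m := by rw [List.length_take] at hlen; omega
  have hhj : hgt (c.take m) j' = hgt c j' := hgt_take c (by omega)
  have hmax : maxHgt (c.take m) j' = maxHgt c j' := maxHgt_take c (by omega)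
  have hT : TinfCol (c.take m) (j' - 1) = TinfCol c (j' - 1) :=
    TinfCol_take c hm1 (j' - 1) (by omega)
  have hex : (∃ j'', 1 ≤ j'' ∧ j'' < j' ∧ hgt (c.take m) j'' = hgt c j') ↔
      (∃ j'', 1 ≤ j'' ∧ j'' < j' ∧ hgt c j'' = hgt c j') := by
    constructor <;> rintro ⟨x, hx1, hx2, hx3⟩ <;> refine ⟨x, hx1, hx2, ?_⟩
    · rw [hgt_take c (show x - 1 < m by omega)] at hx3; exact hx3
    · rw [hgt_take c (show x - 1 < m by omega)]; exact hx3
  refine ⟨h2, le_trans hjm hmle, h1, ?_⟩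
  simp only [hhj, hmax, hT, hex] at hmain
  exact hmain

/-- if a box `b` of `D^k` is right extremal in `D` relative to
`ℓ(D)`, then `b` is right extremal in `D^k` relative to `ℓ(D^k)`. -/
theorem statement18 (n : ℕ) (hn : 0 < n) (c : List ℕ) (hc : IsComposition c n)
    (hk : 2 ≤ c.length) :
    ∀ i j, IsBox (c.take (c.length - 1)) i j →
      (∀ i' j', ¬ LineB c (Tentry c i j) i' j' Lab.one) →
      (∀ i' j', ¬ LineB (c.take (c.length - 1))
          (Tentry (c.take (c.length - 1)) i j) i' j' Lab.one) := by
  intro i j hbox h i' j' hl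
  set m := c.length - 1 with hmdef
  have hm1 : 1 ≤ m := by omega
  have hmle : m ≤ c.length := by omega
  obtain ⟨hj1, hj2, hi1, hi2⟩ := hbox
  have hj2' : j ≤ m := by rw [List.length_take] at hj2; omega
  rw [Tentry_take c (show j - 1 ≤ m by omega)] at hl
  exact h i' j' (lineB_one_take c hm1 hmle hl)
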